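/- arXiv:1808.04297 — 2 statements merged into one kernel-verified Lean document; each statement's English description precedes it below -/
import Mathlib

section
/- Let d ≥ 1, 𝒯 a d-cluster category over an algebraically closed field k, R a d-cluster tilting object of 𝒯, and X ∈ pr(R). Then X is maximal R[1]-rigid with respect to pr(R) if and only if X is a d-cluster tilting object of 𝒯. -/
/-!
Formalization of results from "Relative rigid objects in triangulated categories"
by Fu–Geng–Liu.  Throughout, `C` is a Krull–Schmidt, Hom-finite, `k`-linear
triangulated category over an algebraically closed field `k` (Krull–Schmidt is
encoded as: Hom-finite over `k` together with idempotent completeness), with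
suspension functor `⟦1⟧`.
-/

open CategoryTheory Limits Pretriangulated Opposite

universe w v u

namespace RelRigid

variable {k : Type w} [Field k] [IsAlgClosed k]
variable {C : Type u} [Category.{v} C] [Preadditive C] [CategoryTheory.Linear k C]
  [HasZeroObject C] [HasShift C ℤ] [∀ n : ℤ, (shiftFunctor C n).Additive]
  [Pretriangulated C] [HasFiniteBiproducts C] [IsIdempotentComplete C]
  [∀ X Y : C, Module.Finite k (X ⟶ Y)]

/-- `X` belongs to `add R`: it is a direct summand of a finite direct sum of copies of `R`. -/
def InAdd (R X : C) : Prop :=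
  ∃ (n : ℕ) (s : X ⟶ ⨁ (fun _ : Fin n => R)) (p : (⨁ (fun _ : Fin n => R)) ⟶ X),
    s ≫ p = 𝟙 X

/-- `Y` is a direct summand of `X`. -/
def IsSummand (Y X : C) : Prop := ∃ (s : Y ⟶ X) (p : X ⟶ Y), s ≫ p = 𝟙 Y

/-- The morphism `f` factors through `add Z`. -/
def FactorsThroughAdd (Z : C) {X Y : C} (f : X ⟶ Y) : Prop :=
  ∃ (Z' : C) (_ : InAdd Z Z') (g : X ⟶ Z') (h : Z' ⟶ Y), g ≫ h = f

/-- `X` is rigid: `Hom(X, X[1]) = 0`. -/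
def IsRigidObj (X : C) : Prop := ∀ f : X ⟶ X⟦(1 : ℤ)⟧, f = 0

/-- `X` is `R[1]`-rigid: `R[1](X, X[1]) = 0`, i.e. every morphism `X ⟶ X[1]`
factoring through `add (R[1])` vanishes. -/
def IsRelRigid (R X : C) : Prop :=
  ∀ f : X ⟶ X⟦(1 : ℤ)⟧, FactorsThroughAdd (R⟦(1 : ℤ)⟧) f → f = 0

/-- `X ∈ pr(R)`: there is a triangle `R₁ ⟶ R₀ ⟶ X ⟶ R₁[1]` with `R₀, R₁ ∈ add R`. -/
def InPr (R X : C) : Prop :=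
  ∃ (R₁ R₀ : C) (_ : InAdd R R₁) (_ : InAdd R R₀) (f : R₁ ⟶ R₀) (g : R₀ ⟶ X)
    (h : X ⟶ R₁⟦(1 : ℤ)⟧), Triangle.mk f g h ∈ distTriang C

/-- `X` is maximal `R[1]`-rigid with respect to `pr(R)`: `X ∈ pr(R)` is `R[1]`-rigid and
any `Z ∈ pr(R)` with `R[1](X ⊕ Z, (X ⊕ Z)[1]) = 0` satisfies `Z ∈ add X`. -/
def IsMaxRelRigid (R X : C) : Prop :=
  InPr R X ∧ IsRelRigid R X ∧ ∀ Z : C, InPr R Z → IsRelRigid R (X ⊞ Z) → InAdd X Z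

/-- `X` is indecomposable. -/
def Indecomp (X : C) : Prop :=
  ¬ IsZero X ∧ ∀ A B : C, Nonempty (X ≅ A ⊞ B) → IsZero A ∨ IsZero B

/-- `f` is a decomposition of `X` into indecomposable objects. -/
def IsDecomp (X : C) {n : ℕ} (f : Fin n → C) : Prop :=
  (∀ i, Indecomp (f i)) ∧ Nonempty (X ≅ ⨁ f)

/-- `|X| = n`: `X` has exactly `n` pairwise non-isomorphic indecomposable direct summands. -/
def NumIndec (X : C) (n : ℕ) : Prop :=
  ∃ g : Fin n → C, (∀ i, Indecomp (g i)) ∧ (∀ i j : Fin n, Nonempty (g i ≅ g j) → i = j) ∧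
    ∀ Y : C, Indecomp Y → (IsSummand Y X ↔ ∃ i : Fin n, Nonempty (Y ≅ g i))

/-- `X` is basic: it decomposes into pairwise non-isomorphic indecomposable objects. -/
def IsBasic (X : C) : Prop :=
  ∃ (n : ℕ) (f : Fin n → C), IsDecomp X f ∧ ∀ i j : Fin n, Nonempty (f i ≅ f j) → i = j

/-- `Hom(R, Y)` is a left module over `End (op R)` (equivalently, a right module over the
endomorphism algebra `Γ = End R`), via precomposition. -/
instance homModule (R Y : C) : Module (End (op R)) (R ⟶ Y) where
  smul g f := g.unop ≫ f
  one_smul f := by show (1 : End (op R)).unop ≫ f = f; simp [End.one_def]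
  mul_smul g h f := by
    show (g * h).unop ≫ f = g.unop ≫ h.unop ≫ f
    simp [End.mul_def]
  smul_zero g := by show g.unop ≫ (0 : _ ⟶ _) = 0; simp
  smul_add g f₁ f₂ := by
    show g.unop ≫ (f₁ + f₂) = g.unop ≫ f₁ + g.unop ≫ f₂
    simp
  add_smul g h f := by
    show (g + h).unop ≫ f = g.unop ≫ f + h.unop ≫ f
    rw [show (g + h).unop = g.unop + h.unop from rfl, Preadditive.add_comp]
  zero_smul f := by show (0 : End (op R)).unop ≫ f = 0; simp

/-- Postcomposition `Hom(R, X) → Hom(R, Y)` with `φ : X ⟶ Y`, i.e. the action of the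
functor `Hom(R, −)` on morphisms; it is linear over `End (op R)`. -/
def homMap (R : C) {X Y : C} (φ : X ⟶ Y) : (R ⟶ X) →ₗ[End (op R)] (R ⟶ Y) where
  toFun u := u ≫ φ
  map_add' u v := by simp [Preadditive.add_comp]
  map_smul' g u := by
    show (g.unop ≫ u) ≫ φ = g.unop ≫ (u ≫ φ)
    simp [Category.assoc]

/-- `T` is a cluster tilting object:
`add T = {X : Hom(T, X[1]) = 0} = {X : Hom(X, T[1]) = 0}`. -/
def IsClusterTilting (T : C) : Prop :=
  (∀ X : C, InAdd T X ↔ ∀ f : T ⟶ X⟦(1 : ℤ)⟧, f = 0) ∧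
  (∀ X : C, InAdd T X ↔ ∀ f : X ⟶ T⟦(1 : ℤ)⟧, f = 0)

/-- `T` is maximal `R[1]`-rigid with respect to the whole category `C`. -/
def IsMaxRelRigidAll (R T : C) : Prop :=
  IsRelRigid R T ∧ ∀ Z : C, IsRelRigid R (T ⊞ Z) → InAdd T Z

/-- `T` is `R[1]`-cluster tilting: `T` is `R[1]`-rigid and `|T| = |R|`. -/
def IsRelClusterTilting (R T : C) : Prop :=
  IsRelRigid R T ∧ ∃ n : ℕ, NumIndec T n ∧ NumIndec R n

/-- `S` is presilting: `Hom(S, S[i]) = 0` for all `i > 0`. -/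
def IsPresilting (S : C) : Prop := ∀ i : ℤ, 0 < i → ∀ f : S ⟶ S⟦i⟧, f = 0

/-- A predicate on objects defines a thick subcategory: closed under isomorphisms,
shifts, extensions (cones) and direct summands. -/
def IsThickClosed (P : C → Prop) : Prop :=
  (∀ X Y : C, (X ≅ Y) → P X → P Y) ∧
  (∀ (X : C) (n : ℤ), P X → P (X⟦n⟧)) ∧
  (∀ T : Triangle C, T ∈ (distTriang C) → P T.obj₁ → P T.obj₂ → P T.obj₃) ∧
  (∀ X Y : C, IsSummand Y X → P X → P Y)

/-- The smallest thick subcategory of `C` containing `S` is `C` itself. -/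
def ThickGenerates (S : C) : Prop :=
  ∀ P : C → Prop, IsThickClosed P → P S → ∀ X : C, P X

/-- `S` is silting: presilting and `thick S = C`. -/
def IsSilting (S : C) : Prop := IsPresilting S ∧ ThickGenerates S

/-- `C` is `n`-Calabi–Yau: there are bifunctorial isomorphisms
`Hom(X, Y) ≅ D Hom(Y, X[n])`, encoded by a perfect pairing
`Hom(X, Y) × Hom(Y, X[n]) → k` which is natural in both variables. -/
def IsCalabiYau (n : ℤ) : Prop :=
  ∃ pair : ∀ X Y : C, (X ⟶ Y) →ₗ[k] ((Y ⟶ X⟦n⟧) →ₗ[k] k),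
    (∀ X Y : C, Function.Bijective (pair X Y)) ∧
    (∀ (X' X Y : C) (u : X' ⟶ X) (f : X ⟶ Y) (g : Y ⟶ X'⟦n⟧),
      pair X' Y (u ≫ f) g = pair X Y f (g ≫ (shiftFunctor C n).map u)) ∧
    (∀ (X Y Y' : C) (v : Y ⟶ Y') (f : X ⟶ Y) (g : Y' ⟶ X⟦n⟧),
      pair X Y' (f ≫ v) g = pair X Y f (v ≫ g))

/-- `T` is `d`-rigid: `Hom(T, T[i]) = 0` for `i = 1, …, d`. -/
def IsDRigid (d : ℤ) (T : C) : Prop := ∀ i : ℤ, 1 ≤ i → i ≤ d → ∀ f : T ⟶ T⟦i⟧, f = 0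

/-- `T` is maximal `d`-rigid. -/
def IsMaxDRigid (d : ℤ) (T : C) : Prop :=
  IsDRigid d T ∧ ∀ Z : C, IsDRigid d (T ⊞ Z) → InAdd T Z

/-- `T` is a `d`-cluster tilting object. -/
def IsDClusterTilting (d : ℤ) (T : C) : Prop :=
  IsDRigid d T ∧
  ∀ X : C, (∀ i : ℤ, 1 ≤ i → i ≤ d → ∀ f : T ⟶ X⟦i⟧, f = 0) → InAdd T X

/-- `X` is a maximal rigid object. -/
def IsMaxRigidObj (X : C) : Prop :=
  IsRigidObj X ∧ ∀ Z : C, IsRigidObj (X ⊞ Z) → InAdd X Z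

/-- The isomorphism setoid on objects of `C` satisfying a predicate `p`. -/
def objSetoid (p : C → Prop) : Setoid {X : C // p X} where
  r X Y := Nonempty (X.1 ≅ Y.1)
  iseqv := ⟨fun _ => ⟨Iso.refl _⟩, fun ⟨e⟩ => ⟨e.symm⟩, fun ⟨e⟩ ⟨f⟩ => ⟨e.trans f⟩⟩

section Modules

variable (Γ : Type w) [Ring Γ]

/-- `f, g` is a minimal projective presentation `P₁ → P₀ → M → 0`:
both `P`s are projective, the sequence is exact with `g` surjective, and the kernels of
`g` and `f` are superfluous submodules (which encodes minimality). -/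
def IsMinProjPres {P₁ P₀ M : Type w} [AddCommGroup P₁] [Module Γ P₁]
    [AddCommGroup P₀] [Module Γ P₀] [AddCommGroup M] [Module Γ M]
    (f : P₁ →ₗ[Γ] P₀) (g : P₀ →ₗ[Γ] M) : Prop :=
  Module.Projective Γ P₁ ∧ Module.Projective Γ P₀ ∧
  Function.Surjective g ∧ Function.Exact f g ∧
  (∀ K : Submodule Γ P₀, LinearMap.ker g ⊔ K = ⊤ → K = ⊤) ∧
  (∀ K : Submodule Γ P₁, LinearMap.ker f ⊔ K = ⊤ → K = ⊤)

/-- `M` is `τ`-rigid, via the Adachi–Iyama–Reiten criterion: for a minimal projective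
presentation `P₁ →f P₀ → M → 0`, the map `Hom(f, M) : Hom(P₀, M) → Hom(P₁, M)` is
surjective. -/
def IsTauRigid (M : Type w) [AddCommGroup M] [Module Γ M] : Prop :=
  ∀ (P₁ P₀ : Type w) [AddCommGroup P₁] [Module Γ P₁] [AddCommGroup P₀] [Module Γ P₀],
    ∀ (f : P₁ →ₗ[Γ] P₀) (g : P₀ →ₗ[Γ] M), IsMinProjPres Γ f g →
    Function.Surjective (fun h : P₀ →ₗ[Γ] M => h ∘ₗ f)

/-- `(M, P)` is a `τ`-rigid pair: `M ∈ mod Γ` is `τ`-rigid, `P` is finitely generated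
projective and `Hom(P, M) = 0`. -/
def IsTauRigidPair (M P : Type w) [AddCommGroup M] [Module Γ M]
    [AddCommGroup P] [Module Γ P] : Prop :=
  Module.Finite Γ M ∧ IsTauRigid Γ M ∧
  Module.Finite Γ P ∧ Module.Projective Γ P ∧ ∀ h : P →ₗ[Γ] M, h = 0

/-- A module is indecomposable. -/
def ModIndec (M : Type w) [AddCommGroup M] [Module Γ M] : Prop :=
  Nontrivial M ∧ ∀ A B : Submodule Γ M, IsCompl A B → A = ⊥ ∨ B = ⊥

/-- An internal decomposition into indecomposable submodules. -/
def IsModDecomp {M : Type w} [AddCommGroup M] [Module Γ M] {n : ℕ}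
    (f : Fin n → Submodule Γ M) : Prop :=
  DirectSum.IsInternal f ∧ ∀ i, ModIndec Γ (f i)

/-- `|M| = n`: `M` has exactly `n` non-isomorphic indecomposable direct summands. -/
def NumIndecMod (M : Type w) [AddCommGroup M] [Module Γ M] (n : ℕ) : Prop :=
  ∃ (m : ℕ) (f : Fin m → Submodule Γ M) (g : Fin n → Submodule Γ M),
    IsModDecomp Γ f ∧ (∀ i, ModIndec Γ (g i)) ∧
    (∀ i j : Fin n, Nonempty (g i ≃ₗ[Γ] g j) → i = j) ∧
    (∀ i : Fin m, ∃ j : Fin n, Nonempty (f i ≃ₗ[Γ] g j)) ∧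
    (∀ j : Fin n, ∃ i : Fin m, Nonempty (f i ≃ₗ[Γ] g j))

/-- `M` is basic: it decomposes into pairwise non-isomorphic indecomposable submodules. -/
def ModBasic (M : Type w) [AddCommGroup M] [Module Γ M] : Prop :=
  ∃ (n : ℕ) (f : Fin n → Submodule Γ M), IsModDecomp Γ f ∧
    ∀ i j : Fin n, Nonempty (f i ≃ₗ[Γ] f j) → i = j

/-- `(M, P)` is a support `τ`-tilting pair: a `τ`-rigid pair with `|M| + |P| = |Γ|`. -/
def IsSuppTauTiltingPair (M P : Type w) [AddCommGroup M] [Module Γ M]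
    [AddCommGroup P] [Module Γ P] : Prop :=
  IsTauRigidPair Γ M P ∧
  ∃ nM nP nΓ : ℕ, NumIndecMod Γ M nM ∧ NumIndecMod Γ P nP ∧ NumIndecMod Γ Γ nΓ ∧
    nM + nP = nΓ

/-- `M` is a support `τ`-tilting module. -/
def IsSuppTauTilting (M : Type w) [AddCommGroup M] [Module Γ M] : Prop :=
  ∃ P : ModuleCat.{w} Γ, ModBasic Γ P ∧ IsSuppTauTiltingPair Γ M P

/-- `M` has projective dimension at most `1`. -/
def PdLeOne (M : Type w) [AddCommGroup M] [Module Γ M] : Prop :=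
  ∃ (P₁ P₀ : ModuleCat.{w} Γ) (f : P₁ →ₗ[Γ] P₀) (g : ↥P₀ →ₗ[Γ] M),
    Module.Projective Γ P₁ ∧ Module.Projective Γ P₀ ∧
    Function.Injective f ∧ Function.Surjective g ∧ Function.Exact f g

/-- `Ext¹_Γ(M, M) = 0`: every self-extension of `M` splits. -/
def SelfExtSplit (M : Type w) [AddCommGroup M] [Module Γ M] : Prop :=
  ∀ (E : ModuleCat.{w} Γ) (i : M →ₗ[Γ] E) (p : ↥E →ₗ[Γ] M),
    Function.Injective i → Function.Surjective p → Function.Exact i p →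
    ∃ r : ↥E →ₗ[Γ] M, r ∘ₗ i = LinearMap.id

/-- `M` is a (basic) tilting module: `M ∈ mod Γ` is basic with `pd M ≤ 1`,
`Ext¹(M, M) = 0` and `|M| = |Γ|`. -/
def IsTiltingMod (M : Type w) [AddCommGroup M] [Module Γ M] : Prop :=
  Module.Finite Γ M ∧ ModBasic Γ M ∧ PdLeOne Γ M ∧ SelfExtSplit Γ M ∧
  ∃ n : ℕ, NumIndecMod Γ M n ∧ NumIndecMod Γ Γ n

/-- The linear-isomorphism setoid on modules satisfying a predicate `p`. -/
def modSetoid (p : ModuleCat.{w} Γ → Prop) : Setoid {M : ModuleCat.{w} Γ // p M} where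
  r M N := Nonempty (↥M.1 ≃ₗ[Γ] ↥N.1)
  iseqv := ⟨fun _ => ⟨LinearEquiv.refl Γ _⟩, fun ⟨e⟩ => ⟨e.symm⟩, fun ⟨e⟩ ⟨f⟩ => ⟨e.trans f⟩⟩

/-- The componentwise linear-isomorphism setoid on pairs of modules satisfying `p`. -/
def pairSetoid (p : ModuleCat.{w} Γ × ModuleCat.{w} Γ → Prop) :
    Setoid {Mp : ModuleCat.{w} Γ × ModuleCat.{w} Γ // p Mp} where
  r A B := Nonempty (↥A.1.1 ≃ₗ[Γ] ↥B.1.1) ∧ Nonempty (↥A.1.2 ≃ₗ[Γ] ↥B.1.2)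
  iseqv := ⟨fun _ => ⟨⟨LinearEquiv.refl Γ _⟩, ⟨LinearEquiv.refl Γ _⟩⟩,
    fun ⟨⟨e⟩, ⟨f⟩⟩ => ⟨⟨e.symm⟩, ⟨f.symm⟩⟩,
    fun ⟨⟨e⟩, ⟨f⟩⟩ ⟨⟨e'⟩, ⟨f'⟩⟩ => ⟨⟨e.trans e'⟩, ⟨f.trans f'⟩⟩⟩

/-- `(M, P)` is a basic `τ`-rigid pair. -/
def BasicTauRigidPair (Mp : ModuleCat.{w} Γ × ModuleCat.{w} Γ) : Prop :=
  IsTauRigidPair Γ ↥Mp.1 ↥Mp.2 ∧ ModBasic Γ ↥Mp.1 ∧ ModBasic Γ ↥Mp.2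

end Modules

/-! ### Auxiliary machinery for the proof of Proposition 4.4 -/
set_option linter.unusedSectionVars false

section Aux

/-- All morphisms from `A` to `B` vanish. -/
def HomZero (A B : C) : Prop := ∀ f : A ⟶ B, f = 0

lemma homZero_src_iso {A A' B : C} (e : A ≅ A') (h : HomZero A B) : HomZero A' B := fun f => by
  have h0 : e.hom ≫ f = 0 := h _
  calc f = e.inv ≫ (e.hom ≫ f) := by simp
  _ = 0 := by rw [h0, comp_zero]

lemma homZero_tgt_iso {A B B' : C} (e : B ≅ B') (h : HomZero A B) : HomZero A B' := fun f => by
  have h0 : f ≫ e.inv = 0 := h _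
  calc f = (f ≫ e.inv) ≫ e.hom := by simp
  _ = 0 := by rw [h0, zero_comp]

lemma homZero_shift {A B : C} (m : ℤ) (h : HomZero A B) :
    HomZero (A⟦m⟧) (B⟦m⟧) := fun f => by
  obtain ⟨g, rfl⟩ := (shiftFunctor C m).map_surjective f
  rw [h g, Functor.map_zero]

lemma homZero_unshift {A B : C} (m : ℤ) (h : HomZero (A⟦m⟧) (B⟦m⟧)) : HomZero A B := fun f =>
  (shiftFunctor C m).map_injective (by rw [h ((shiftFunctor C m).map f), Functor.map_zero])

/-- The canonical isomorphism `B⟦a⟧⟦b⟧ ≅ B⟦c⟧` when `a + b = c`. -/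
noncomputable def shAdd (B : C) (a b c : ℤ) (h : a + b = c) : ((B⟦a⟧)⟦b⟧ : C) ≅ B⟦c⟧ :=
  ((shiftFunctorAdd' C a b c h).app B).symm

lemma homZero_collapse {A B : C} {a b c : ℤ} (h : a + b = c) (hz : HomZero A (B⟦c⟧)) :
    HomZero A ((B⟦a⟧)⟦b⟧) := homZero_tgt_iso (shAdd B a b c h).symm hz

lemma homZero_expand {A B : C} {a b c : ℤ} (h : a + b = c) (hz : HomZero A ((B⟦a⟧)⟦b⟧)) :
    HomZero A (B⟦c⟧) := homZero_tgt_iso (shAdd B a b c h) hz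

lemma inAdd_biprodSelf (R : C) (m : ℕ) : InAdd R (⨁ fun _ : Fin m => R) :=
  ⟨m, 𝟙 _, 𝟙 _, Category.comp_id _⟩

lemma inAdd_map (F : C ⥤ C) [F.Additive] {R A : C} (h : InAdd R A) :
    InAdd (F.obj R) (F.obj A) := by
  obtain ⟨n, s, p, hsp⟩ := h
  refine ⟨n, F.map s ≫ biproduct.lift (fun j => F.map (biproduct.π (fun _ : Fin n => R) j)),
    biproduct.desc (fun j => F.map (biproduct.ι (fun _ : Fin n => R) j)) ≫ F.map p, ?_⟩
  have hmid : biproduct.lift (fun j => F.map (biproduct.π (fun _ : Fin n => R) j)) ≫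
      biproduct.desc (fun j => F.map (biproduct.ι (fun _ : Fin n => R) j)) = 𝟙 _ := by
    rw [biproduct.lift_desc]
    have : ∀ j : Fin n, F.map (biproduct.π (fun _ : Fin n => R) j) ≫
        F.map (biproduct.ι (fun _ : Fin n => R) j) =
        F.map (biproduct.π (fun _ : Fin n => R) j ≫ biproduct.ι (fun _ : Fin n => R) j) :=
      fun j => (F.map_comp _ _).symm
    rw [Finset.sum_congr rfl (fun j _ => this j), ← F.map_sum, biproduct.total, F.map_id]
  calc (F.map s ≫ biproduct.lift fun j => F.map (biproduct.π (fun _ : Fin n => R) j)) ≫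
      (biproduct.desc (fun j => F.map (biproduct.ι (fun _ : Fin n => R) j)) ≫ F.map p)
      = F.map s ≫ (biproduct.lift (fun j => F.map (biproduct.π (fun _ : Fin n => R) j)) ≫
        biproduct.desc (fun j => F.map (biproduct.ι (fun _ : Fin n => R) j))) ≫ F.map p := by
        simp only [Category.assoc]
    _ = F.map s ≫ F.map p := by rw [hmid, Category.id_comp]
    _ = 𝟙 _ := by rw [← F.map_comp, hsp, F.map_id]

lemma homZero_tgt_add {A P B : C} (h : HomZero A P) (hB : InAdd P B) : HomZero A B := by
  obtain ⟨n, s, p, hsp⟩ := hB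
  intro f
  have h2 : f ≫ s = 0 := biproduct.hom_ext _ _ (fun j => by
    rw [Category.assoc, zero_comp]
    exact h _)
  calc f = f ≫ s ≫ p := by rw [hsp, Category.comp_id]
  _ = 0 := by rw [← Category.assoc, h2, zero_comp]

lemma homZero_src_add {A P B : C} (h : HomZero P A) (hB : InAdd P B) : HomZero B A := by
  obtain ⟨n, s, p, hsp⟩ := hB
  intro f
  have h2 : p ≫ f = 0 := biproduct.hom_ext' _ _ (fun j => by
    rw [comp_zero, ← Category.assoc]
    exact h _)
  calc f = (s ≫ p) ≫ f := by rw [hsp, Category.id_comp]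
  _ = 0 := by rw [Category.assoc, h2, comp_zero]

lemma hom_shift_biprod_ext {A X Y : C} (i : ℤ) (t : A ⟶ ((X ⊞ Y)⟦i⟧ : C))
    (h1 : t ≫ (biprod.fst : X ⊞ Y ⟶ X)⟦i⟧' = 0)
    (h2 : t ≫ (biprod.snd : X ⊞ Y ⟶ Y)⟦i⟧' = 0) : t = 0 := by
  calc t = t ≫ (𝟙 (X ⊞ Y))⟦i⟧' := by rw [CategoryTheory.Functor.map_id, Category.comp_id]
    _ = t ≫ ((biprod.fst : X ⊞ Y ⟶ X) ≫ biprod.inl)⟦i⟧' +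
        t ≫ ((biprod.snd : X ⊞ Y ⟶ Y) ≫ biprod.inr)⟦i⟧' := by
        rw [← Preadditive.comp_add, ← Functor.map_add, biprod.total]
    _ = 0 := by
        rw [Functor.map_comp, Functor.map_comp, ← Category.assoc, ← Category.assoc, h1, h2,
          zero_comp, zero_comp, add_zero]

lemma homZero_shift_biprod {A X Y : C} (i : ℤ) (hX : HomZero A (X⟦i⟧)) (hY : HomZero A (Y⟦i⟧)) :
    HomZero A ((X ⊞ Y)⟦i⟧) := fun f =>
  hom_shift_biprod_ext i f (hX _) (hY _)

lemma homZero_of_sum_rigid {W A B : C} (sA : A ⟶ W) (pA : W ⟶ A) (hA : sA ≫ pA = 𝟙 A)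
    (sB : B ⟶ W) (pB : W ⟶ B) (hB : sB ≫ pB = 𝟙 B) {i : ℤ}
    (h : ∀ f : W ⟶ W⟦i⟧, f = 0) : HomZero A (B⟦i⟧) := fun f => by
  have h0 : pA ≫ f ≫ sB⟦i⟧' = 0 := h _
  calc f = (sA ≫ pA) ≫ f ≫ sB⟦i⟧' ≫ pB⟦i⟧' := by
        rw [hA, Category.id_comp, ← Functor.map_comp, hB, CategoryTheory.Functor.map_id, Category.comp_id]
    _ = sA ≫ (pA ≫ f ≫ sB⟦i⟧') ≫ pB⟦i⟧' := by simp only [Category.assoc]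
    _ = 0 := by rw [h0, zero_comp, comp_zero]

lemma fta_comp {P A B A' B' : C} {f : A ⟶ B} (h : FactorsThroughAdd P f)
    (l : A' ⟶ A) (r : B ⟶ B') : FactorsThroughAdd P (l ≫ f ≫ r) := by
  obtain ⟨Q, hQ, g, h', rfl⟩ := h
  exact ⟨Q, hQ, l ≫ g, h' ≫ r, by simp⟩

/-! Triangle exactness helpers. -/

lemma cov3shift {T : Triangle C} (hT : T ∈ distTriang C) (m : ℤ) {W : C}
    (f : W ⟶ (T.obj₃⟦m⟧ : C)) (hf : f ≫ T.mor₃⟦m⟧' = 0) :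
    ∃ g : W ⟶ T.obj₂⟦m⟧, f = g ≫ T.mor₂⟦m⟧' := by
  have hT' : (Triangle.shiftFunctor C m).obj T ∈ distTriang C :=
    Triangle.shift_distinguished T hT m
  obtain ⟨g, hg⟩ := Triangle.coyoneda_exact₃ _ hT' f (by
    change f ≫ (m.negOnePow • (T.mor₃⟦m⟧' ≫ (shiftFunctorComm C 1 m).hom.app T.obj₁)) = 0
    rw [Linear.comp_units_smul, ← Category.assoc, hf, zero_comp, smul_zero])
  change f = g ≫ (m.negOnePow • T.mor₂⟦m⟧') at hg
  replace hg := hg.trans (Linear.comp_units_smul _ _ _)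
  refine ⟨m.negOnePow • g, ?_⟩
  exact hg.trans (Linear.units_smul_comp _ _ _).symm

lemma homZero_cov {T : Triangle C} (hT : T ∈ distTriang C) (m : ℤ) {W : C}
    (h2 : HomZero W (T.obj₂⟦m⟧)) (h13 : HomZero W ((T.obj₁⟦(1 : ℤ)⟧)⟦m⟧)) :
    HomZero W (T.obj₃⟦m⟧) := fun f => by
  obtain ⟨g, hg⟩ := cov3shift hT m f (h13 _)
  rw [hg, h2 g, zero_comp]

lemma homZero_contra {T : Triangle C} (hT : T ∈ distTriang C) {W : C}
    (h2 : HomZero T.obj₂ W) (h13 : HomZero (T.obj₁⟦(1 : ℤ)⟧) W) : HomZero T.obj₃ W := fun f => by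
  obtain ⟨g, hg⟩ := Triangle.yoneda_exact₃ _ hT f (h2 _)
  rw [hg, h13 g, comp_zero]

/-! Calabi–Yau duality for Hom-vanishing. -/

lemma homZero_CY {n : ℤ} (hCY : IsCalabiYau (k := k) (C := C) n) (A B : C) :
    HomZero A B ↔ HomZero B (A⟦n⟧) := by
  obtain ⟨pair, hbij, -, -⟩ := hCY
  constructor
  · intro h g
    refine (Module.forall_dual_apply_eq_zero_iff k g).mp (fun φ => ?_)
    obtain ⟨f, rfl⟩ := (hbij A B).2 φ
    rw [h f, map_zero]
    rfl
  · intro h f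
    have h0 : pair A B f = 0 := by
      apply LinearMap.ext
      intro g
      rw [h g, map_zero, LinearMap.zero_apply]
    exact (hbij A B).1 (by rw [h0, map_zero])

lemma homZero_CY' {n : ℤ} (hCY : IsCalabiYau (k := k) (C := C) n) {A B : C} (i j : ℤ)
    (hij : j + i = n) : HomZero A (B⟦i⟧) ↔ HomZero B (A⟦j⟧) := by
  rw [homZero_CY hCY A (B⟦i⟧)]
  constructor
  · intro h
    exact homZero_unshift i (homZero_tgt_iso (shAdd A j i n hij).symm h)
  · intro h
    exact homZero_tgt_iso (shAdd A j i n hij) (homZero_shift i h)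

/-! Approximations. -/

include k in
lemma exists_approx (R Z : C) : ∃ (m : ℕ) (b : (⨁ fun _ : Fin m => R) ⟶ Z),
    ∀ φ : R ⟶ Z, ∃ ρ : R ⟶ ⨁ (fun _ : Fin m => R), ρ ≫ b = φ := by
  let bs := Module.finBasis k (R ⟶ Z)
  refine ⟨Module.finrank k (R ⟶ Z), biproduct.desc (fun j => bs j), fun φ => ?_⟩
  refine ⟨biproduct.lift (fun j => bs.repr φ j • 𝟙 R), ?_⟩
  rw [biproduct.lift_desc]
  simp only [Linear.smul_comp, Category.id_comp]
  exact bs.sum_repr φ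

include k in
lemma exists_coapprox (R X : C) : ∃ (m : ℕ) (v : R ⟶ ⨁ (fun _ : Fin m => X)),
    ∀ φ : R ⟶ X, ∃ ψ : (⨁ fun _ : Fin m => X) ⟶ X, v ≫ ψ = φ := by
  let bs := Module.finBasis k (R ⟶ X)
  refine ⟨Module.finrank k (R ⟶ X), biproduct.lift (fun j => bs j), fun φ => ?_⟩
  refine ⟨biproduct.desc (fun j => bs.repr φ j • 𝟙 X), ?_⟩
  rw [biproduct.lift_desc]
  simp only [Linear.comp_smul, Category.comp_id]
  exact bs.sum_repr φ

end Aux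

-- Characterization of `pr(R)` by Hom-vanishing, for a `d`-cluster tilting object `R`.
include k in
lemma inPr_iff (d : ℤ) (hd : 1 ≤ d) {R : C} (hR : IsDClusterTilting d R) (Z : C) :
    InPr R Z ↔ ∀ i : ℤ, 1 ≤ i → i ≤ d - 1 → HomZero R (Z⟦i⟧) := by
  have hRadd : ∀ j : ℤ, 1 ≤ j → j ≤ d → ∀ {Q : C}, InAdd R Q → HomZero R (Q⟦j⟧) :=
    fun j a b {Q} hQ =>
      homZero_tgt_add (fun f => hR.1 j a b f) (inAdd_map (shiftFunctor C j) hQ)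
  constructor
  · rintro ⟨R₁, R₀, hR₁, hR₀, a, b, c, hT⟩ i h1 h2
    exact homZero_cov hT i (hRadd i h1 (by omega) hR₀)
      (homZero_collapse (rfl : (1 : ℤ) + i = 1 + i) (hRadd (1 + i) (by omega) (by omega) hR₁))
  · intro hvan
    obtain ⟨m, b, happrox⟩ := exists_approx (k := k) R Z
    obtain ⟨W, g, h, hT⟩ := distinguished_cocone_triangle b
    have hW0 : HomZero R W := by
      intro f
      obtain ⟨f', hf'⟩ := Triangle.coyoneda_exact₃ _ hT f
        (hRadd 1 le_rfl hd (inAdd_biprodSelf R m) _)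
      obtain ⟨ρ, hρ⟩ := happrox f'
      have hbg : b ≫ (Triangle.mk b g h).mor₂ = 0 := comp_distTriang_mor_zero₁₂ _ hT
      rw [hf', ← hρ]
      exact (Category.assoc ρ b _).trans ((congrArg (fun t => ρ ≫ t) hbg).trans comp_zero)
    have hWj : ∀ j : ℤ, 0 ≤ j → j ≤ d - 1 → HomZero R (W⟦j⟧) := by
      intro j a bb
      by_cases hj : j = 0
      · subst hj
        exact homZero_tgt_iso ((shiftFunctorZero C ℤ).app W).symm hW0
      · exact homZero_cov hT j (hvan j (by omega) bb)
          (homZero_collapse (rfl : (1 : ℤ) + j = 1 + j)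
            (hRadd (1 + j) (by omega) (by omega) (inAdd_biprodSelf R m)))
    have hWadd : InAdd R ((W⟦(-1 : ℤ)⟧ : C)) := by
      apply hR.2
      intro i h1 h2 f
      exact homZero_collapse (show (-1 : ℤ) + i = i - 1 by omega)
        (hWj (i - 1) (by omega) (by omega)) f
    exact ⟨W⟦(-1 : ℤ)⟧, ⨁ (fun _ : Fin m => R), hWadd, inAdd_biprodSelf R m,
      (Triangle.mk b g h).invRotate.mor₁, (Triangle.mk b g h).invRotate.mor₂,
      (Triangle.mk b g h).invRotate.mor₃, inv_rot_of_distTriang _ hT⟩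

/-- The key rank/duality argument: an `R[1]`-rigid object of `pr(R)` satisfies
`Hom(X, X[1]) = 0`. -/
lemma rigid1_of_relRigid (d : ℤ) (hd : 1 ≤ d)
    (hCY : IsCalabiYau (k := k) (C := C) (d + 1))
    {R X : C} (hRrig : IsDRigid d R)
    {R₁ R₀ : C} (hR₁ : InAdd R R₁) (hR₀ : InAdd R R₀)
    {a : R₁ ⟶ R₀} {b : R₀ ⟶ X} {c : X ⟶ (R₁⟦(1 : ℤ)⟧ : C)}
    (hT : Triangle.mk a b c ∈ distTriang C)
    (hrel : IsRelRigid R X) : HomZero X (X⟦(1 : ℤ)⟧) := by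
  obtain ⟨pair, hbij, hnat1, hnat2⟩ := id hCY
  have hRadd : ∀ j : ℤ, 1 ≤ j → j ≤ d → ∀ {Q : C}, InAdd R Q → HomZero R (Q⟦j⟧) :=
    fun j ha hb {Q} hQ =>
      homZero_tgt_add (fun f => hRrig j ha hb f) (inAdd_map (shiftFunctor C j) hQ)
  -- the three linear maps
  set u : (X ⟶ (X⟦(1 : ℤ)⟧ : C)) →ₗ[k] (R₀ ⟶ (X⟦(1 : ℤ)⟧ : C)) :=
    Linear.leftComp k _ b with hu_def
  set ustar : ((X⟦(1 : ℤ)⟧ : C) ⟶ (R₀⟦(d + 1 : ℤ)⟧ : C)) →ₗ[k]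
      ((X⟦(1 : ℤ)⟧ : C) ⟶ (X⟦(d + 1 : ℤ)⟧ : C)) :=
    Linear.rightComp k _ (b⟦(d + 1 : ℤ)⟧') with hustar_def
  set wmap : ((X⟦(1 : ℤ)⟧ : C) ⟶ (X⟦(d + 1 : ℤ)⟧ : C)) →ₗ[k]
      ((X⟦(1 : ℤ)⟧ : C) ⟶ ((R₁⟦(1 : ℤ)⟧ : C)⟦(d + 1 : ℤ)⟧ : C)) :=
    Linear.rightComp k _ (c⟦(d + 1 : ℤ)⟧') with hwmap_def
  have hbc : b ≫ c = 0 := comp_distTriang_mor_zero₂₃ _ hT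
  have hu_inj : Function.Injective u := by
    rw [injective_iff_map_eq_zero]
    intro f hf
    have hf' : b ≫ f = 0 := hf
    obtain ⟨g, hg⟩ := Triangle.yoneda_exact₃ _ hT f hf'
    exact hrel f ⟨R₁⟦(1 : ℤ)⟧, inAdd_map (shiftFunctor C (1 : ℤ)) hR₁, c, g, hg.symm⟩
  have hrange : LinearMap.range ustar = LinearMap.ker wmap := by
    apply le_antisymm
    · rintro h ⟨g, rfl⟩
      show (g ≫ b⟦(d + 1 : ℤ)⟧') ≫ c⟦(d + 1 : ℤ)⟧' = 0
      rw [Category.assoc, ← Functor.map_comp, hbc, Functor.map_zero, comp_zero]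
    · intro h hh
      obtain ⟨g, hg⟩ := cov3shift hT (d + 1) h hh
      exact ⟨g, hg.symm⟩
  have hker : LinearMap.range ustar = ⊥ := by
    rw [Submodule.eq_bot_iff]
    rintro h ⟨g, rfl⟩
    show g ≫ b⟦(d + 1 : ℤ)⟧' = 0
    rcases eq_or_lt_of_le hd with hd1 | hd2
    · -- d = 1 : use relative rigidity through the shift conjugation
      have hd1' : d = 1 := hd1.symm
      subst hd1'
      set η := shiftFunctorAdd' C (1 : ℤ) (1 : ℤ) (1 + 1 : ℤ) rfl with hη
      obtain ⟨g₀, hg₀⟩ := (shiftFunctor C (1 : ℤ)).map_surjective (g ≫ η.hom.app R₀)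
      have hfact : g₀ ≫ b⟦(1 : ℤ)⟧' = 0 :=
        hrel _ ⟨R₀⟦(1 : ℤ)⟧, inAdd_map (shiftFunctor C (1 : ℤ)) hR₀, g₀, b⟦(1 : ℤ)⟧', rfl⟩
      have hnatb := η.hom.naturality b
      have hzero : (g ≫ b⟦(1 + 1 : ℤ)⟧') ≫ η.hom.app X = 0 := by
        rw [Category.assoc, hnatb, ← Category.assoc, ← hg₀]
        show (shiftFunctor C (1 : ℤ)).map g₀ ≫
          (shiftFunctor C (1 : ℤ)).map (b⟦(1 : ℤ)⟧') = 0
        rw [← Functor.map_comp, hfact, Functor.map_zero]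
      have hcan : (g ≫ b⟦(1 + 1 : ℤ)⟧') ≫ η.hom.app X = 0 ≫ η.hom.app X := by
        rw [hzero, zero_comp]
      exact (cancel_mono (η.hom.app X)).mp hcan
    · -- 2 ≤ d : the relevant Hom space vanishes entirely
      have h2d : (2 : ℤ) ≤ d := by omega
      have hRX1 : HomZero R (X⟦(1 : ℤ)⟧) :=
        homZero_cov hT 1 (hRadd 1 le_rfl (by omega) hR₀)
          (homZero_collapse (rfl : (1 : ℤ) + 1 = 1 + 1)
            (hRadd (1 + 1) (by omega) (by omega) hR₁))
      have hXRd : HomZero X (R⟦(d : ℤ)⟧) :=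
        (homZero_CY' hCY 1 d (by omega)).mp hRX1
      have hXR₀d : HomZero X ((R₀⟦(d : ℤ)⟧ : C)) :=
        homZero_tgt_add hXRd (inAdd_map (shiftFunctor C d) hR₀)
      have hfin : HomZero ((X⟦(1 : ℤ)⟧ : C)) ((R₀⟦(d + 1 : ℤ)⟧ : C)) :=
        homZero_expand (rfl : (d : ℤ) + 1 = d + 1) (homZero_shift 1 hXR₀d)
      rw [hfin g, zero_comp]
  -- rank computation
  have hcomm : (pair R₀ (X⟦(1 : ℤ)⟧)) ∘ₗ u =
      (LinearMap.dualMap ustar) ∘ₗ (pair X (X⟦(1 : ℤ)⟧)) := by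
    apply LinearMap.ext; intro f
    apply LinearMap.ext; intro g
    exact hnat1 R₀ X (X⟦(1 : ℤ)⟧) b f g
  have hinj2 : Function.Injective ((pair R₀ (X⟦(1 : ℤ)⟧)) ∘ₗ u) := by
    rw [LinearMap.coe_comp]
    exact (hbij R₀ (X⟦(1 : ℤ)⟧)).1.comp hu_inj
  have hfr : Module.finrank k (X ⟶ (X⟦(1 : ℤ)⟧ : C)) = 0 := by
    calc Module.finrank k (X ⟶ (X⟦(1 : ℤ)⟧ : C))
        = Module.finrank k (LinearMap.range ((pair R₀ (X⟦(1 : ℤ)⟧)) ∘ₗ u)) :=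
          (LinearMap.finrank_range_of_inj hinj2).symm
      _ = Module.finrank k (LinearMap.range
            ((LinearMap.dualMap ustar) ∘ₗ (pair X (X⟦(1 : ℤ)⟧)))) := by rw [hcomm]
      _ = Module.finrank k (LinearMap.range (LinearMap.dualMap ustar)) := by
          rw [LinearMap.range_comp_of_range_eq_top _
            (LinearMap.range_eq_top.mpr (hbij X (X⟦(1 : ℤ)⟧)).2)]
      _ = Module.finrank k (LinearMap.range ustar) :=
          LinearMap.finrank_range_dualMap_eq_finrank_range ustar
      _ = 0 := by rw [hker, finrank_bot]
  have hsub : Subsingleton (X ⟶ (X⟦(1 : ℤ)⟧ : C)) := Module.finrank_zero_iff.mp hfr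
  intro f
  exact Subsingleton.elim f 0

/-- Lemma A: an `R[1]`-rigid object of `pr(R)` is `d`-rigid. -/
lemma dRigid_of_relRigid (d : ℤ) (hd : 1 ≤ d)
    (hCY : IsCalabiYau (k := k) (C := C) (d + 1))
    {R X : C} (hRrig : IsDRigid d R) (hXpr : InPr R X) (hrel : IsRelRigid R X) :
    IsDRigid d X := by
  obtain ⟨R₁, R₀, hR₁, hR₀, a, b, c, hT⟩ := hXpr
  have hRadd : ∀ j : ℤ, 1 ≤ j → j ≤ d → ∀ {Q : C}, InAdd R Q → HomZero R (Q⟦j⟧) :=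
    fun j ha hb {Q} hQ =>
      homZero_tgt_add (fun f => hRrig j ha hb f) (inAdd_map (shiftFunctor C j) hQ)
  have h1 : HomZero X (X⟦(1 : ℤ)⟧) := rigid1_of_relRigid d hd hCY hRrig hR₁ hR₀ hT hrel
  -- morphisms from `add R` to shifts of X
  have hS1 : ∀ (A : C), InAdd R A → ∀ j : ℤ, 1 ≤ j → j ≤ d - 1 → HomZero A (X⟦j⟧) := by
    intro A hA j ha hb
    refine homZero_cov hT j ?_ ?_
    · exact homZero_src_add (hRadd j ha (by omega) hR₀) hA
    · exact homZero_src_add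
        (homZero_collapse (rfl : (1 : ℤ) + j = 1 + j)
          (hRadd (1 + j) (by omega) (by omega) hR₁)) hA
  intro i hi1 hid
  by_cases hieq1 : i = 1
  · subst hieq1; exact h1
  by_cases hieqd : i = d
  · exact (homZero_CY' hCY i 1 (by omega)).mpr h1
  -- 2 ≤ i ≤ d - 1
  have hi2 : (2 : ℤ) ≤ i := by omega
  have hid1 : i ≤ d - 1 := by omega
  refine homZero_contra hT (hS1 R₀ hR₀ i (by omega) hid1) ?_
  exact homZero_expand (show (i - 1 : ℤ) + 1 = i by omega)
    (homZero_shift 1 (hS1 R₁ hR₁ (i - 1) (by omega) (by omega)))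

lemma relRigid_biprod {R X E : C}
    (h11 : ∀ f : X ⟶ (X⟦(1 : ℤ)⟧ : C), FactorsThroughAdd ((R⟦(1 : ℤ)⟧ : C)) f → f = 0)
    (h12 : ∀ f : X ⟶ (E⟦(1 : ℤ)⟧ : C), FactorsThroughAdd ((R⟦(1 : ℤ)⟧ : C)) f → f = 0)
    (h21 : ∀ f : E ⟶ (X⟦(1 : ℤ)⟧ : C), FactorsThroughAdd ((R⟦(1 : ℤ)⟧ : C)) f → f = 0)
    (h22 : ∀ f : E ⟶ (E⟦(1 : ℤ)⟧ : C), FactorsThroughAdd ((R⟦(1 : ℤ)⟧ : C)) f → f = 0) :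
    IsRelRigid R (X ⊞ E) := by
  intro f hf
  have c11 := h11 _ (fta_comp hf biprod.inl ((biprod.fst : X ⊞ E ⟶ X)⟦(1 : ℤ)⟧'))
  have c12 := h12 _ (fta_comp hf biprod.inl ((biprod.snd : X ⊞ E ⟶ E)⟦(1 : ℤ)⟧'))
  have c21 := h21 _ (fta_comp hf biprod.inr ((biprod.fst : X ⊞ E ⟶ X)⟦(1 : ℤ)⟧'))
  have c22 := h22 _ (fta_comp hf biprod.inr ((biprod.snd : X ⊞ E ⟶ E)⟦(1 : ℤ)⟧'))
  apply biprod.hom_ext'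
  · rw [comp_zero]
    apply hom_shift_biprod_ext 1
    · rw [Category.assoc]; exact c11
    · rw [Category.assoc]; exact c12
  · rw [comp_zero]
    apply hom_shift_biprod_ext 1
    · rw [Category.assoc]; exact c21
    · rw [Category.assoc]; exact c22

-- The Bongartz-type completion: the cone of a left `add X`-approximation of `R`.
include k in
lemma bongartz (d : ℤ) (hd : 1 ≤ d) {R X : C} (hRrig : IsDRigid d R)
    (hRX : ∀ i : ℤ, 1 ≤ i → i ≤ d - 1 → HomZero R (X⟦i⟧))
    (hX1 : HomZero X (X⟦(1 : ℤ)⟧)) (hXrel : IsRelRigid R X) :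
    ∃ (E X₀ : C) (_ : InAdd X X₀) (v : R ⟶ X₀) (w : X₀ ⟶ E) (e : E ⟶ (R⟦(1 : ℤ)⟧ : C))
      (_ : Triangle.mk v w e ∈ distTriang C),
      (∀ i : ℤ, 1 ≤ i → i ≤ d - 1 → HomZero R (E⟦i⟧)) ∧ IsRelRigid R (X ⊞ E) := by
  obtain ⟨m, v, happrox⟩ := exists_coapprox (k := k) R X
  obtain ⟨E, w, e, hTB⟩ := distinguished_cocone_triangle v
  have hX₀ : InAdd X (⨁ fun _ : Fin m => X) := inAdd_biprodSelf X m
  have hRR1 : HomZero ((R⟦(1 : ℤ)⟧ : C)) ((R⟦(1 : ℤ)⟧ : C)⟦(1 : ℤ)⟧) :=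
    homZero_shift 1 (fun f => hRrig 1 le_rfl hd f)
  -- vanishing of Hom(E, X[1])
  have hEX1 : HomZero E (X⟦(1 : ℤ)⟧) := by
    intro f
    have hwf : w ≫ f = 0 := homZero_src_add hX1 hX₀ _
    obtain ⟨g, hg⟩ := Triangle.yoneda_exact₃ _ hTB f hwf
    obtain ⟨φ, rfl⟩ := (shiftFunctor C (1 : ℤ)).map_surjective g
    obtain ⟨ψ, hψ⟩ := happrox φ
    have hev : (Triangle.mk v w e).mor₃ ≫ v⟦(1 : ℤ)⟧' = 0 := comp_distTriang_mor_zero₃₁ _ hTB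
    rw [hg, ← hψ]
    exact (congrArg (fun t => (Triangle.mk v w e).mor₃ ≫ t)
      ((shiftFunctor C (1 : ℤ)).map_comp v ψ)).trans
      ((Category.assoc _ _ _).symm.trans ((congrArg (fun t => t ≫ ψ⟦(1 : ℤ)⟧') hev).trans zero_comp))
  -- the factoring-through-add-R[1] killers into E[1]
  have hkill : ∀ {A : C}, HomZero A ((⨁ fun _ : Fin m => X)⟦(1 : ℤ)⟧ : C) →
      ∀ f : A ⟶ (E⟦(1 : ℤ)⟧ : C), FactorsThroughAdd ((R⟦(1 : ℤ)⟧ : C)) f → f = 0 := by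
    intro A hA f hf
    obtain ⟨Q, hQ, g, h', rfl⟩ := hf
    have h1 : (g ≫ h') ≫ e⟦(1 : ℤ)⟧' = 0 := by
      rw [Category.assoc, homZero_src_add hRR1 hQ (h' ≫ e⟦(1 : ℤ)⟧'), comp_zero]
    obtain ⟨f', hf'⟩ := cov3shift hTB 1 (g ≫ h') h1
    exact hf'.trans ((congrArg (fun t => t ≫ _) (hA f')).trans zero_comp)
  refine ⟨E, ⨁ (fun _ : Fin m => X), hX₀, v, w, e, hTB, ?_, ?_⟩
  · intro i h1 h2
    refine homZero_cov hTB i ?_ ?_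
    · exact homZero_tgt_add (hRX i h1 h2) (inAdd_map (shiftFunctor C i) hX₀)
    · exact homZero_collapse (rfl : (1 : ℤ) + i = 1 + i)
        (fun f => hRrig (1 + i) (by omega) (by omega) f)
  · refine relRigid_biprod (fun f hf => hXrel f hf) ?_ ?_ ?_
    · exact hkill (homZero_tgt_add hX1 (inAdd_map (shiftFunctor C (1 : ℤ)) hX₀))
    · intro f _
      exact hEX1 f
    · exact hkill (homZero_tgt_add hEX1 (inAdd_map (shiftFunctor C (1 : ℤ)) hX₀))

/-- **Proposition 4.4.**  Let `C` be a `d`-cluster category (encoded by its defining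
properties: a Krull–Schmidt, Hom-finite, `(d+1)`-Calabi–Yau triangulated category in
which `d`-cluster tilting objects coincide with maximal `d`-rigid objects and all have
the same number of non-isomorphic indecomposable direct summands), `R` a `d`-cluster
tilting object and `X ∈ pr(R)`.  Then `X` is maximal `R[1]`-rigid with respect to
`pr(R)` if and only if `X` is a `d`-cluster tilting object. -/
theorem statement17 (d : ℤ) (hd : 1 ≤ d)
    (hCY : IsCalabiYau (k := k) (C := C) (d + 1))
    (hdct : ∀ T : C, IsDClusterTilting d T ↔ IsMaxDRigid d T)
    (hnum : ∀ T T' : C, IsDClusterTilting d T → IsDClusterTilting d T' →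
      ∃ n : ℕ, NumIndec T n ∧ NumIndec T' n)
    (R : C) (hR : IsDClusterTilting d R) (X : C) (hX : InPr R X) :
    IsMaxRelRigid R X ↔ IsDClusterTilting d X := by
  have hRrig : IsDRigid d R := hR.1
  constructor
  · rintro ⟨hXpr, hXrel, hmax⟩
    have hXd : IsDRigid d X := dRigid_of_relRigid d hd hCY hRrig hXpr hXrel
    have hX1 : HomZero X (X⟦(1 : ℤ)⟧) := fun f => hXd 1 le_rfl hd f
    have hRX := (inPr_iff (k := k) d hd hR X).mp hXpr
    obtain ⟨E, X₀, hX₀, v, w, e, hTB, hEvan, hrelXE⟩ := bongartz (k := k) d hd hRrig hRX hX1 hXrel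
    have hEpr : InPr R E := (inPr_iff (k := k) d hd hR E).mpr hEvan
    have hEX : InAdd X E := hmax E hEpr hrelXE
    apply (hdct X).mpr
    refine ⟨hXd, fun Z hZd => ?_⟩
    have hXZ : ∀ i : ℤ, 1 ≤ i → i ≤ d → HomZero X (Z⟦i⟧) := fun i h1 h2 =>
      homZero_of_sum_rigid biprod.inl biprod.fst biprod.inl_fst biprod.inr biprod.snd
        biprod.inr_snd (hZd i h1 h2)
    have hRZ : ∀ i : ℤ, 1 ≤ i → i ≤ d - 1 → HomZero R (Z⟦i⟧) := by
      intro i h1 h2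
      have hE2 : HomZero E ((Z⟦i⟧)⟦(1 : ℤ)⟧) :=
        homZero_src_add (homZero_collapse (rfl : (i : ℤ) + 1 = i + 1)
          (hXZ (i + 1) (by omega) (by omega))) hEX
      have h13 : HomZero ((X₀⟦(1 : ℤ)⟧ : C)) ((Z⟦i⟧)⟦(1 : ℤ)⟧) :=
        homZero_src_add (homZero_shift 1 (hXZ i h1 (by omega)))
          (inAdd_map (shiftFunctor C (1 : ℤ)) hX₀)
      have hcontra : HomZero ((R⟦(1 : ℤ)⟧ : C)) ((Z⟦i⟧)⟦(1 : ℤ)⟧) :=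
        homZero_contra (rot_of_distTriang _ hTB) hE2 h13
      exact homZero_unshift 1 hcontra
    exact hmax Z ((inPr_iff (k := k) d hd hR Z).mpr hRZ) (fun f _ => hZd 1 le_rfl hd f)
  · intro hXdct
    obtain ⟨hXr, hmaxd⟩ := (hdct X).mp hXdct
    refine ⟨hX, fun f _ => hXr 1 le_rfl hd f, fun Z hZpr hrel => ?_⟩
    have hWpr : InPr R (X ⊞ Z) := (inPr_iff (k := k) d hd hR (X ⊞ Z)).mpr
      (fun i h1 h2 => homZero_shift_biprod i ((inPr_iff (k := k) d hd hR X).mp hX i h1 h2)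
        ((inPr_iff (k := k) d hd hR Z).mp hZpr i h1 h2))
    exact hmaxd Z (dRigid_of_relRigid d hd hCY hRrig hWpr hrel)

end RelRigid
end

section
/- Let 𝒯 be a Krull–Schmidt, Hom-finite, 2-Calabi–Yau triangulated category over an algebraically closed field k and R a basic maximal rigid object of 𝒯. Then an object X ∈ 𝒯 is maximal R[1]-rigid with respect to pr(R) if and only if X is a maximal rigid object of 𝒯. -/
/-!
Formalization of results from "Relative rigid objects in triangulated categories"
by Fu–Geng–Liu.  Throughout, `C` is a Krull–Schmidt, Hom-finite, `k`-linear
triangulated category over an algebraically closed field `k` (Krull–Schmidt is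
encoded as: Hom-finite over `k` together with idempotent completeness), with
suspension functor `⟦1⟧`.
-/

open CategoryTheory Limits Pretriangulated Opposite

universe w v u

namespace RelRigid

variable {k : Type w} [Field k] [IsAlgClosed k]
variable {C : Type u} [Category.{v} C] [Preadditive C] [CategoryTheory.Linear k C]
  [HasZeroObject C] [HasShift C ℤ] [∀ n : ℤ, (shiftFunctor C n).Additive]
  [Pretriangulated C] [HasFiniteBiproducts C] [IsIdempotentComplete C]
  [∀ X Y : C, Module.Finite k (X ⟶ Y)]

section Proof46

variable {R A B : C}

lemma inAdd_self (R : C) : InAdd R R := by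
  refine ⟨1, biproduct.lift (fun _ => 𝟙 R), biproduct.π _ 0, ?_⟩
  simp

lemma inAdd_biproduct (R : C) (n : ℕ) : InAdd R (⨁ (fun _ : Fin n => R)) :=
  ⟨n, 𝟙 _, 𝟙 _, by simp⟩

/-- If a morphism `A ⟶ B⟦1⟧` becomes zero after conjugating by retractions exhibiting
`A`, `B` as summands of `P`, `Q`, then it is zero. -/
lemma conj_zero {P Q : C} (iA : A ⟶ P) (pA : P ⟶ A) (hA : iA ≫ pA = 𝟙 A)
    (iB : B ⟶ Q) (pB : Q ⟶ B) (hB : iB ≫ pB = 𝟙 B) (f : A ⟶ B⟦(1 : ℤ)⟧)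
    (h : pA ≫ f ≫ (shiftFunctor C (1 : ℤ)).map iB = 0) : f = 0 := by
  calc f = (iA ≫ pA) ≫ f ≫
        ((shiftFunctor C (1 : ℤ)).map iB ≫ (shiftFunctor C (1 : ℤ)).map pB) := by
        rw [hA, ← CategoryTheory.Functor.map_comp, hB, CategoryTheory.Functor.map_id,
          Category.id_comp, Category.comp_id]
    _ = iA ≫ (pA ≫ f ≫ (shiftFunctor C (1 : ℤ)).map iB) ≫
        (shiftFunctor C (1 : ℤ)).map pB := by simp only [Category.assoc]
    _ = 0 := by rw [h, zero_comp, comp_zero]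

lemma addHom_shift_zero (hRrig : IsRigidObj R)
    (hA : InAdd R A) (hB : InAdd R B) (f : A ⟶ B⟦(1 : ℤ)⟧) : f = 0 := by
  obtain ⟨n, s, p, hsp⟩ := hA
  obtain ⟨m, s', p', hsp'⟩ := hB
  refine conj_zero s p hsp s' p' hsp' f ?_
  apply biproduct.hom_ext'
  intro i
  rw [comp_zero]
  calc biproduct.ι (fun _ : Fin n => R) i ≫ p ≫ f ≫ (shiftFunctor C (1 : ℤ)).map s'
      = (biproduct.ι (fun _ : Fin n => R) i ≫ p ≫ f ≫ (shiftFunctor C (1 : ℤ)).map s') ≫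
        (shiftFunctor C (1 : ℤ)).map (𝟙 _) := by
        rw [CategoryTheory.Functor.map_id, Category.comp_id]
    _ = ∑ j, (biproduct.ι (fun _ : Fin n => R) i ≫ p ≫ f ≫ (shiftFunctor C (1 : ℤ)).map s') ≫
          (shiftFunctor C (1 : ℤ)).map
            (biproduct.π (fun _ : Fin m => R) j ≫ biproduct.ι (fun _ : Fin m => R) j) := by
        rw [← biproduct.total, CategoryTheory.Functor.map_sum, Preadditive.comp_sum]
    _ = 0 := by
        apply Finset.sum_eq_zero
        intro j _
        rw [CategoryTheory.Functor.map_comp, ← Category.assoc,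
          hRrig ((biproduct.ι (fun _ : Fin n => R) i ≫ p ≫ f ≫
            (shiftFunctor C (1 : ℤ)).map s') ≫
            (shiftFunctor C (1 : ℤ)).map (biproduct.π (fun _ : Fin m => R) j)),
          zero_comp]

lemma inAdd_shift (h : InAdd R A) : InAdd (R⟦(1 : ℤ)⟧) (A⟦(1 : ℤ)⟧) := by
  obtain ⟨n, s, p, hsp⟩ := h
  refine ⟨n, (shiftFunctor C (1 : ℤ)).map s ≫
      biproduct.lift (fun j => (shiftFunctor C (1 : ℤ)).map (biproduct.π (fun _ : Fin n => R) j)),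
    biproduct.desc (fun j => (shiftFunctor C (1 : ℤ)).map (biproduct.ι (fun _ : Fin n => R) j)) ≫
      (shiftFunctor C (1 : ℤ)).map p, ?_⟩
  have hmid : biproduct.lift
        (fun j => (shiftFunctor C (1 : ℤ)).map (biproduct.π (fun _ : Fin n => R) j)) ≫
      biproduct.desc
        (fun j => (shiftFunctor C (1 : ℤ)).map (biproduct.ι (fun _ : Fin n => R) j)) = 𝟙 _ := by
    rw [biproduct.lift_desc]
    calc (∑ j, (shiftFunctor C (1 : ℤ)).map (biproduct.π (fun _ : Fin n => R) j) ≫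
            (shiftFunctor C (1 : ℤ)).map (biproduct.ι (fun _ : Fin n => R) j))
        = (shiftFunctor C (1 : ℤ)).map
            (∑ j, biproduct.π (fun _ : Fin n => R) j ≫ biproduct.ι (fun _ : Fin n => R) j) := by
          rw [CategoryTheory.Functor.map_sum]
          exact Finset.sum_congr rfl (fun j _ => (CategoryTheory.Functor.map_comp _ _ _).symm)
      _ = 𝟙 _ := by rw [biproduct.total, CategoryTheory.Functor.map_id]
  rw [Category.assoc, ← Category.assoc (biproduct.lift _), hmid, Category.id_comp,
    ← CategoryTheory.Functor.map_comp, hsp, CategoryTheory.Functor.map_id]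

lemma isRigid_summand₂ {X Z : C} (h : IsRigidObj (X ⊞ Z)) : IsRigidObj Z := by
  intro f
  exact conj_zero biprod.inr biprod.snd biprod.inr_snd biprod.inr biprod.snd biprod.inr_snd f
    (h _)

lemma relRigid_component {R P Q : C} (h : IsRelRigid R (P ⊞ Q))
    (iA : A ⟶ P ⊞ Q) (pA : P ⊞ Q ⟶ A) (hA : iA ≫ pA = 𝟙 A)
    (iB : B ⟶ P ⊞ Q) (pB : P ⊞ Q ⟶ B) (hB : iB ≫ pB = 𝟙 B)
    (f : A ⟶ B⟦(1 : ℤ)⟧) (hf : FactorsThroughAdd (R⟦(1 : ℤ)⟧) f) : f = 0 := by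
  obtain ⟨Z', hZ', g, h', hgh⟩ := hf
  refine conj_zero iA pA hA iB pB hB f ?_
  apply h
  exact ⟨Z', hZ', pA ≫ g, h' ≫ (shiftFunctor C (1 : ℤ)).map iB,
    by rw [Category.assoc, ← Category.assoc g, hgh]⟩

lemma isRigid_biprod {A B : C} (hAA : ∀ f : A ⟶ A⟦(1 : ℤ)⟧, f = 0)
    (hAB : ∀ f : A ⟶ B⟦(1 : ℤ)⟧, f = 0) (hBA : ∀ f : B ⟶ A⟦(1 : ℤ)⟧, f = 0)
    (hBB : ∀ f : B ⟶ B⟦(1 : ℤ)⟧, f = 0) : IsRigidObj (A ⊞ B) := by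
  intro f
  have hid : (𝟙 ((A ⊞ B)⟦(1 : ℤ)⟧)) =
      (shiftFunctor C (1 : ℤ)).map biprod.fst ≫ (shiftFunctor C (1 : ℤ)).map biprod.inl +
        (shiftFunctor C (1 : ℤ)).map biprod.snd ≫ (shiftFunctor C (1 : ℤ)).map biprod.inr := by
    rw [← CategoryTheory.Functor.map_comp, ← CategoryTheory.Functor.map_comp,
      ← CategoryTheory.Functor.map_add, biprod.total, CategoryTheory.Functor.map_id]
  have hfst : f ≫ (shiftFunctor C (1 : ℤ)).map biprod.fst = 0 := by
    apply biprod.hom_ext'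
    · rw [comp_zero]; exact hAA _
    · rw [comp_zero]; exact hBA _
  have hsnd : f ≫ (shiftFunctor C (1 : ℤ)).map biprod.snd = 0 := by
    apply biprod.hom_ext'
    · rw [comp_zero]; exact hAB _
    · rw [comp_zero]; exact hBB _
  calc f = f ≫ 𝟙 _ := by rw [Category.comp_id]
    _ = (f ≫ (shiftFunctor C (1 : ℤ)).map biprod.fst) ≫
          (shiftFunctor C (1 : ℤ)).map biprod.inl +
        (f ≫ (shiftFunctor C (1 : ℤ)).map biprod.snd) ≫
          (shiftFunctor C (1 : ℤ)).map biprod.inr := by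
        rw [hid, Preadditive.comp_add, Category.assoc, Category.assoc]
    _ = 0 := by rw [hfst, hsnd, zero_comp, zero_comp, add_zero]

lemma inPr_of_rigid (hCY : IsCalabiYau (k := k) (C := C) 2) {R : C} (hR : IsMaxRigidObj R)
    {X : C} (hX : IsRigidObj X) : InPr R X := by
  obtain ⟨pair, hbij, hnat1, hnat2⟩ := hCY
  obtain ⟨n, sp, hspan⟩ := Module.Finite.exists_fin (R := k) (M := (R ⟶ X))
  set R0 := ⨁ (fun _ : Fin n => R) with hR0
  set f0 : R0 ⟶ X := biproduct.desc sp with hf0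
  have hfac : ∀ v : R ⟶ X, ∃ w : R ⟶ R0, w ≫ f0 = v := by
    intro v
    have hv : v ∈ Submodule.span k (Set.range sp) := hspan ▸ Submodule.mem_top
    obtain ⟨c, hc⟩ := (Submodule.mem_span_range_iff_exists_fun k).mp hv
    refine ⟨biproduct.lift (fun i => c i • 𝟙 R), ?_⟩
    rw [hf0, biproduct.lift_desc, ← hc]
    exact Finset.sum_congr rfl (fun i _ => by rw [Linear.smul_comp, Category.id_comp])
  obtain ⟨Y, g, h, hT⟩ := distinguished_cocone_triangle₁ f0
  have key1 : ∀ (A : C), InAdd R A → ∀ u : A ⟶ Y⟦(1 : ℤ)⟧, u = 0 := by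
    have base : ∀ v : R ⟶ Y⟦(1 : ℤ)⟧, v = 0 := by
      intro v
      have hv1 : v ≫ (shiftFunctor C (1 : ℤ)).map g = 0 :=
        addHom_shift_zero hR.1 (inAdd_self R) (inAdd_biproduct R n) _
      obtain ⟨w, hw⟩ := Triangle.coyoneda_exact₁ (Triangle.mk g f0 h) hT v hv1
      obtain ⟨w', hw'⟩ := hfac w
      have h23 := comp_distTriang_mor_zero₂₃ (Triangle.mk g f0 h) hT
      rw [hw, ← hw']
      exact (Category.assoc _ _ _).trans ((congrArg (fun x => w' ≫ x) h23).trans comp_zero)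
    rintro A ⟨m, s, p, hsp⟩ u
    have hpu : p ≫ u = 0 := by
      apply biproduct.hom_ext'
      intro i
      rw [comp_zero, ← Category.assoc]
      exact base _
    calc u = s ≫ p ≫ u := by rw [← Category.assoc, hsp, Category.id_comp]
      _ = 0 := by rw [hpu, comp_zero]
  have key2 : ∀ (A : C), InAdd R A → ∀ v : Y ⟶ A⟦(1 : ℤ)⟧, v = 0 := by
    intro A hA v
    apply (hbij Y (A⟦(1 : ℤ)⟧)).injective
    rw [map_zero]
    ext gg
    have hg0 : gg = 0 := by
      set e := (shiftFunctorAdd' C (1 : ℤ) (1 : ℤ) (2 : ℤ) (by norm_num)).hom.app Y with he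
      have hiso : IsIso e := by rw [he]; infer_instance
      have hg1 : gg ≫ e = (shiftFunctor C (1 : ℤ)).map
          ((shiftFunctor C (1 : ℤ)).preimage (gg ≫ e)) :=
        ((shiftFunctor C (1 : ℤ)).map_preimage (gg ≫ e)).symm
      have : (shiftFunctor C (1 : ℤ)).preimage (gg ≫ e) = 0 := key1 A hA _
      rw [this, CategoryTheory.Functor.map_zero] at hg1
      have := hiso
      calc gg = (gg ≫ e) ≫ inv e := by rw [Category.assoc, IsIso.hom_inv_id, Category.comp_id]
        _ = 0 := by rw [hg1, zero_comp]
    rw [hg0, map_zero, LinearMap.zero_apply]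
  have key3 : ∀ u : Y ⟶ Y⟦(1 : ℤ)⟧, u = 0 := by
    intro u
    have h1 : u ≫ (shiftFunctor C (1 : ℤ)).map g = 0 := key2 R0 (inAdd_biproduct R n) _
    obtain ⟨w, hw⟩ := Triangle.coyoneda_exact₁ (Triangle.mk g f0 h) hT u h1
    have h2 : h ≫ (shiftFunctor C (1 : ℤ)).map w = 0 := hX _
    obtain ⟨t, ht⟩ := Triangle.yoneda_exact₃ (Triangle.mk g f0 h).rotate
      (rot_of_distTriang _ hT) ((shiftFunctor C (1 : ℤ)).map w) (by exact h2)
    have ht' : (shiftFunctor C (1 : ℤ)).map w =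
        -((shiftFunctor C (1 : ℤ)).map g ≫ t) := by
      exact ht.trans (Preadditive.neg_comp _ _)
    obtain ⟨t0, ht0⟩ : ∃ t0 : R0 ⟶ X, (shiftFunctor C (1 : ℤ)).map t0 = t :=
      ⟨(shiftFunctor C (1 : ℤ)).preimage t, (shiftFunctor C (1 : ℤ)).map_preimage t⟩
    have hw0 : w = -(g ≫ t0) := by
      apply (shiftFunctor C (1 : ℤ)).map_injective
      rw [ht', ← ht0]
      exact (congrArg Neg.neg ((shiftFunctor C (1 : ℤ)).map_comp g t0).symm).trans
        ((shiftFunctor C (1 : ℤ)).map_neg (f := g ≫ t0)).symm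
    have ht0h : t0 ≫ h = 0 := key1 R0 (inAdd_biproduct R n) _
    rw [hw, hw0]
    show (-(g ≫ t0)) ≫ h = 0
    rw [Preadditive.neg_comp, Category.assoc, ht0h, comp_zero, neg_zero]
  have hrig : IsRigidObj (R ⊞ Y) :=
    isRigid_biprod hR.1 (key1 R (inAdd_self R)) (key2 R (inAdd_self R)) key3
  exact ⟨Y, R0, hR.2 Y hrig, inAdd_biproduct R n, g, f0, h, hT⟩

lemma rigid_of_relRigid (hCY : IsCalabiYau (k := k) (C := C) 2) {R : C}
    (hRrig : IsRigidObj R) {W₁ W₂ : C} (hW₁ : InPr R W₁) (hW₂ : InPr R W₂)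
    (rel12 : ∀ f : W₁ ⟶ W₂⟦(1 : ℤ)⟧, FactorsThroughAdd (R⟦(1 : ℤ)⟧) f → f = 0)
    (rel21 : ∀ f : W₂ ⟶ W₁⟦(1 : ℤ)⟧, FactorsThroughAdd (R⟦(1 : ℤ)⟧) f → f = 0) :
    ∀ f : W₁ ⟶ W₂⟦(1 : ℤ)⟧, f = 0 := by
  obtain ⟨pair, hbij, hnat1, hnat2⟩ := hCY
  obtain ⟨R₁, R₀, hR₁, hR₀, a, b, c, hT⟩ := hW₁
  obtain ⟨S₁, S₀, hS₁, hS₀, a', b', c', hT'⟩ := hW₂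
  intro f
  -- Step A : `b ≫ f ≫ c'⟦1⟧ = 0`, via the Calabi–Yau pairing.
  have hθ : b ≫ f ≫ (shiftFunctor C (1 : ℤ)).map c' = 0 := by
    apply (hbij R₀ ((S₁⟦(1 : ℤ)⟧)⟦(1 : ℤ)⟧)).injective
    rw [map_zero]
    ext gg
    rw [LinearMap.zero_apply]
    set e := (shiftFunctorAdd' C (1 : ℤ) (1 : ℤ) (2 : ℤ) (by norm_num)) with he
    set g₁ := (shiftFunctor C (1 : ℤ)).preimage (gg ≫ e.hom.app R₀) with hg₁
    have hg₁' : (shiftFunctor C (1 : ℤ)).map g₁ = gg ≫ e.hom.app R₀ :=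
      (shiftFunctor C (1 : ℤ)).map_preimage _
    have hψ : c' ≫ g₁ ≫ (shiftFunctor C (1 : ℤ)).map b = 0 := by
      apply rel21
      exact ⟨S₁⟦(1 : ℤ)⟧, inAdd_shift hS₁, c', g₁ ≫ (shiftFunctor C (1 : ℤ)).map b, rfl⟩
    have hφ : (shiftFunctor C (1 : ℤ)).map c' ≫ gg ≫ (shiftFunctor C (2 : ℤ)).map b = 0 := by
      have hnat : (shiftFunctor C (2 : ℤ)).map b ≫ e.hom.app W₁ =
          e.hom.app R₀ ≫ (shiftFunctor C (1 : ℤ)).map ((shiftFunctor C (1 : ℤ)).map b) :=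
        e.hom.naturality b
      have hmono : ((shiftFunctor C (1 : ℤ)).map c' ≫ gg ≫ (shiftFunctor C (2 : ℤ)).map b) ≫
          e.hom.app W₁ = 0 := by
        rw [Category.assoc, Category.assoc, hnat, ← Category.assoc gg, ← hg₁',
          ← CategoryTheory.Functor.map_comp, ← CategoryTheory.Functor.map_comp]
        rw [hψ, CategoryTheory.Functor.map_zero]
      rw [← cancel_mono (e.hom.app W₁), zero_comp]
      exact hmono
    calc (pair R₀ ((S₁⟦(1 : ℤ)⟧)⟦(1 : ℤ)⟧)) (b ≫ f ≫ (shiftFunctor C (1 : ℤ)).map c') gg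
        = (pair W₁ ((S₁⟦(1 : ℤ)⟧)⟦(1 : ℤ)⟧)) (f ≫ (shiftFunctor C (1 : ℤ)).map c')
            (gg ≫ (shiftFunctor C (2 : ℤ)).map b) := hnat1 _ _ _ b _ gg
      _ = (pair W₁ (W₂⟦(1 : ℤ)⟧)) f
            ((shiftFunctor C (1 : ℤ)).map c' ≫ gg ≫ (shiftFunctor C (2 : ℤ)).map b) := by
          rw [hnat2 W₁ (W₂⟦(1 : ℤ)⟧) ((S₁⟦(1 : ℤ)⟧)⟦(1 : ℤ)⟧) ((shiftFunctor C (1 : ℤ)).map c') f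
            (gg ≫ (shiftFunctor C (2 : ℤ)).map b)]
      _ = 0 := by rw [hφ, map_zero]
  -- Step B : `b ≫ f = 0`.
  have hbf : b ≫ f = 0 := by
    have hT3 : (Triangle.mk a' b' c').rotate.rotate.rotate ∈ distTriang C :=
      rot_of_distTriang _ (rot_of_distTriang _ (rot_of_distTriang _ hT'))
    obtain ⟨v, hv⟩ := Triangle.coyoneda_exact₃ _ hT3 (b ≫ f) (by
      show (b ≫ f) ≫ (Triangle.mk a' b' c').rotate.rotate.rotate.mor₃ = 0
      have : (Triangle.mk a' b' c').rotate.rotate.rotate.mor₃ =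
          -((shiftFunctor C (1 : ℤ)).map c') := by
        rfl
      rw [this]
      exact ((Preadditive.comp_neg _ _).trans
        (congrArg Neg.neg ((Category.assoc _ _ _).trans hθ))).trans neg_zero)
    have hv0 : v = 0 := by
      have : (Triangle.mk a' b' c').rotate.rotate.rotate.obj₂ = S₀⟦(1 : ℤ)⟧ := rfl
      exact addHom_shift_zero hRrig hR₀ hS₀ v
    exact hv.trans (by rw [hv0]; exact zero_comp)
  -- Step C : `f` factors through `R₁⟦1⟧`.
  obtain ⟨w, hw⟩ := Triangle.yoneda_exact₃ (Triangle.mk a b c) hT f hbf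
  exact rel12 f ⟨R₁⟦(1 : ℤ)⟧, inAdd_shift hR₁, c, w, hw.symm⟩

end Proof46

/-- **Proposition 4.6.**  Let `C` be a `2`-Calabi–Yau triangulated category and `R` a
basic maximal rigid object.  Then `X` is maximal `R[1]`-rigid with respect to `pr(R)`
if and only if `X` is a maximal rigid object of `C`. -/
theorem statement18 (hCY : IsCalabiYau (k := k) (C := C) 2)
    (R : C) (hRbasic : IsBasic R) (hR : IsMaxRigidObj R) (X : C) :
    IsMaxRelRigid R X ↔ IsMaxRigidObj X := by
  constructor
  · rintro ⟨hpr, hrel, hmax⟩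
    have hXrig : IsRigidObj X := rigid_of_relRigid hCY hR.1 hpr hpr hrel hrel
    refine ⟨hXrig, ?_⟩
    intro Z hZrig
    have hZ : IsRigidObj Z := isRigid_summand₂ hZrig
    exact hmax Z (inPr_of_rigid hCY hR hZ) (fun f _ => hZrig f)
  · rintro ⟨hXrig, hXmax⟩
    have hXpr : InPr R X := inPr_of_rigid hCY hR hXrig
    refine ⟨hXpr, fun f _ => hXrig f, ?_⟩
    intro Z hZpr hrel
    have relXZ : ∀ f : X ⟶ Z⟦(1 : ℤ)⟧, FactorsThroughAdd (R⟦(1 : ℤ)⟧) f → f = 0 :=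
      fun f hf => relRigid_component hrel biprod.inl biprod.fst biprod.inl_fst
        biprod.inr biprod.snd biprod.inr_snd f hf
    have relZX : ∀ f : Z ⟶ X⟦(1 : ℤ)⟧, FactorsThroughAdd (R⟦(1 : ℤ)⟧) f → f = 0 :=
      fun f hf => relRigid_component hrel biprod.inr biprod.snd biprod.inr_snd
        biprod.inl biprod.fst biprod.inl_fst f hf
    have relZZ : ∀ f : Z ⟶ Z⟦(1 : ℤ)⟧, FactorsThroughAdd (R⟦(1 : ℤ)⟧) f → f = 0 :=
      fun f hf => relRigid_component hrel biprod.inr biprod.snd biprod.inr_snd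
        biprod.inr biprod.snd biprod.inr_snd f hf
    have hZZ := rigid_of_relRigid hCY hR.1 hZpr hZpr relZZ relZZ
    have hXZ := rigid_of_relRigid hCY hR.1 hXpr hZpr relXZ relZX
    have hZX := rigid_of_relRigid hCY hR.1 hZpr hXpr relZX relXZ
    exact hXmax Z (isRigid_biprod hXrig hXZ hZX hZZ)

end RelRigid
end
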